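/- Let f be an entropy generator and γ ∈ ℝ, and suppose that for all probability distributions P, Q on ℕ one has ∑_{i,j} f(p_i·q_j) = ∑_i f(p_i) + ∑_j f(q_j) + γ·(∑_i f(p_i))·(∑_j f(q_j)). Then for every rational number q ∈ [0,1] and every natural number n ≥ 1: f(q/n) = q·f(1/n) + (1/n)·f(q) + γ·f(q)·f(1/n). -/

import Mathlib

/-- A probability distribution on ℕ: nonnegative weights summing to 1. -/
def IsProbDist (p : ℕ → ℝ) : Prop := (∀ i, 0 ≤ p i) ∧ HasSum p 1

/-- An entropy generator: real analytic on `[0,∞)`, strictly convex on `[0,∞)`,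
with `f 0 = f 1 = 0` and `f' 1 = 1`. -/
def IsEntropyGenerator (f : ℝ → ℝ) : Prop :=
  (∀ x ∈ Set.Ici (0 : ℝ), AnalyticAt ℝ f x) ∧
  StrictConvexOn ℝ (Set.Ici (0 : ℝ)) f ∧
  f 0 = 0 ∧ f 1 = 0 ∧ deriv f 1 = 1

noncomputable def mixD (a b : ℕ) (q : ℝ) : ℕ → ℝ :=
  fun i => if i < a then 1 / (b : ℝ) else if i = a then q else 0

lemma mixD_nonneg (a b : ℕ) (q : ℝ) (hq : 0 ≤ q) (i : ℕ) : 0 ≤ mixD a b q i := by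
  unfold mixD; split_ifs <;> positivity

lemma mixD_eq_zero (a b : ℕ) (q : ℝ) {i : ℕ} (hi : a + 1 ≤ i) : mixD a b q i = 0 := by
  unfold mixD
  rw [if_neg (by omega), if_neg (by omega)]

lemma mixD_probDist (a b : ℕ) (q : ℝ) (hq : 0 ≤ q)
    (hsum : (a : ℝ) / (b : ℝ) + q = 1) : IsProbDist (mixD a b q) := by
  refine ⟨mixD_nonneg a b q hq, ?_⟩
  have h := hasSum_sum_of_ne_finset_zero (s := Finset.range (a + 1))
    (f := mixD a b q) (L := SummationFilter.unconditional ℕ) (fun i hi => mixD_eq_zero a b q (by simpa using hi))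
  have : ∑ i ∈ Finset.range (a + 1), mixD a b q i = 1 := by
    rw [Finset.sum_range_succ]
    have h1 : ∀ i ∈ Finset.range a, mixD a b q i = 1 / (b : ℝ) := by
      intro i hi
      simp only [Finset.mem_range] at hi
      simp [mixD, hi]
    rw [Finset.sum_congr rfl h1, Finset.sum_const, Finset.card_range]
    have : mixD a b q a = q := by simp [mixD]
    rw [this]
    rw [nsmul_eq_mul, mul_one_div]
    exact hsum
  rwa [this] at h

lemma tsum_f_mixD (f : ℝ → ℝ) (hf0 : f 0 = 0) (a b : ℕ) (q : ℝ) :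
    (∑' i, f (mixD a b q i)) = a * f (1 / (b : ℝ)) + f q := by
  rw [tsum_eq_sum (s := Finset.range (a + 1))
    (fun i hi => by rw [mixD_eq_zero a b q (by simpa using hi), hf0])]
  rw [Finset.sum_range_succ]
  have h1 : ∀ i ∈ Finset.range a, f (mixD a b q i) = f (1 / (b : ℝ)) := by
    intro i hi
    simp only [Finset.mem_range] at hi
    simp [mixD, hi]
  rw [Finset.sum_congr rfl h1, Finset.sum_const, Finset.card_range]
  have : mixD a b q a = q := by simp [mixD]
  rw [this]; ring

lemma tsum_f_double (f : ℝ → ℝ) (hf0 : f 0 = 0) (n a b : ℕ) (q : ℝ) :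
    (∑' ij : ℕ × ℕ, f (mixD n n 0 ij.1 * mixD a b q ij.2)) =
      n * (a * f (1 / ((n : ℝ) * (b : ℝ))) + f (q / (n : ℝ))) := by
  rw [tsum_eq_sum (s := Finset.range (n + 1) ×ˢ Finset.range (a + 1))
    (f := fun ij : ℕ × ℕ => f (mixD n n 0 ij.1 * mixD a b q ij.2))
    (by
      intro ij hij
      simp only [Finset.mem_product, Finset.mem_range, not_and_or, not_lt] at hij
      rcases hij with h1 | h2
      · rw [mixD_eq_zero n n 0 h1, zero_mul, hf0]
      · rw [mixD_eq_zero a b q h2, mul_zero, hf0])]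
  rw [Finset.sum_product]
  rw [Finset.sum_range_succ]
  have hlast : ∑ j ∈ Finset.range (a + 1), f (mixD n n 0 n * mixD a b q j) = 0 := by
    have : mixD n n 0 n = 0 := by simp [mixD]
    simp [this, hf0]
  rw [hlast, add_zero]
  have hrow : ∀ i ∈ Finset.range n,
      (∑ j ∈ Finset.range (a + 1), f (mixD n n 0 i * mixD a b q j)) =
        a * f (1 / ((n : ℝ) * (b : ℝ))) + f (q / (n : ℝ)) := by
    intro i hi
    simp only [Finset.mem_range] at hi
    have hPi : mixD n n 0 i = 1 / (n : ℝ) := by simp [mixD, hi]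
    rw [Finset.sum_range_succ]
    have h1 : ∀ j ∈ Finset.range a,
        f (mixD n n 0 i * mixD a b q j) = f (1 / ((n : ℝ) * (b : ℝ))) := by
      intro j hj
      simp only [Finset.mem_range] at hj
      have : mixD a b q j = 1 / (b : ℝ) := by simp [mixD, hj]
      rw [hPi, this, div_mul_div_comm, one_mul]
    rw [Finset.sum_congr rfl h1, Finset.sum_const, Finset.card_range]
    have : mixD a b q a = q := by simp [mixD]
    rw [this, hPi, nsmul_eq_mul, one_div_mul_eq_div]
  rw [Finset.sum_congr rfl hrow, Finset.sum_const, Finset.card_range, nsmul_eq_mul]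
theorem stmt2 (f : ℝ → ℝ) (hf : IsEntropyGenerator f) (γ : ℝ)
    (h : ∀ p q : ℕ → ℝ, IsProbDist p → IsProbDist q →
      (∑' ij : ℕ × ℕ, f (p ij.1 * q ij.2)) =
        (∑' i, f (p i)) + (∑' j, f (q j))
          + γ * (∑' i, f (p i)) * (∑' j, f (q j))) :
    ∀ q : ℚ, 0 ≤ q → q ≤ 1 → ∀ n : ℕ, 1 ≤ n →
      f ((q : ℝ) / (n : ℝ)) =
        (q : ℝ) * f (1 / (n : ℝ)) + (1 / (n : ℝ)) * f (q : ℝ)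
          + γ * f (q : ℝ) * f (1 / (n : ℝ)) := by
  intro q hq0 hq1 n hn
  obtain ⟨_, _, hf0, -, -⟩ := hf
  set r : ℚ := 1 - q with hr
  have hr0 : 0 ≤ r := by simp [hr]; linarith
  set a : ℕ := r.num.toNat with ha
  set b : ℕ := r.den with hb
  have hbpos : 0 < b := r.pos
  have hnpos : 0 < n := hn
  have hnR : (0:ℝ) < (n:ℝ) := by exact_mod_cast hnpos
  have hbR : (0:ℝ) < (b:ℝ) := by exact_mod_cast hbpos
  have hab : ((a : ℝ) / (b : ℝ)) = 1 - (q : ℝ) := by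
    have hnum : ((a : ℕ) : ℝ) = (r.num : ℝ) := by
      rw [ha]; exact_mod_cast Int.toNat_of_nonneg (Rat.num_nonneg.2 hr0)
    rw [hnum, hb, ← Rat.cast_def, hr]
    push_cast
    ring
  have hqR : (0:ℝ) ≤ (q:ℝ) := by exact_mod_cast hq0
  -- distributions
  have hPn : IsProbDist (mixD n n 0) := by
    apply mixD_probDist _ _ _ le_rfl
    rw [div_self (ne_of_gt hnR)]; ring
  have hPb : IsProbDist (mixD b b 0) := by
    apply mixD_probDist _ _ _ le_rfl
    rw [div_self (ne_of_gt hbR)]; ring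
  have hQ : IsProbDist (mixD a b (q : ℝ)) := by
    apply mixD_probDist _ _ _ hqR
    rw [hab]; ring
  have E1 := h _ _ hPn hPb
  have E2 := h _ _ hPn hQ
  rw [tsum_f_double f hf0, tsum_f_mixD f hf0, tsum_f_mixD f hf0, hf0] at E1 E2
  have hzn : (0:ℝ) / (n:ℝ) = 0 := by simp
  rw [hzn, hf0] at E1
  set A := f (1 / (n:ℝ))
  set B := f (1 / (b:ℝ))
  set C := f (q:ℝ)
  set X := f (1 / ((n:ℝ) * (b:ℝ)))
  have hnne : (n:ℝ) ≠ 0 := ne_of_gt hnR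
  have hbne : (b:ℝ) ≠ 0 := ne_of_gt hbR
  have hX : X = (1/(b:ℝ)) * A + (1/(n:ℝ)) * B + γ * A * B := by
    field_simp at E1 ⊢
    nlinarith [E1]
  have hF : f ((q:ℝ) / (n:ℝ)) =
      (1 - (a:ℝ)/(b:ℝ)) * A + (1/(n:ℝ)) * C + γ * A * C := by
    rw [hX] at E2
    field_simp at E2 ⊢
    nlinarith [E2]
  rw [hF, hab]
  ring
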